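/- (Worst-case braking safety.) Let a > 0, s > 0, and let P₀, p₀ ∈ ℝ and speeds v₀ ≥ v̂₀ ≥ 0 (the follower is at least as fast as the leader). If both vehicles brake simultaneously with deceleration a from time 0 and the initial gap satisfies P₀ − p₀ ≥ s + (v₀² − v̂₀²)/(2a), then for all t ≥ 0 the gap pos(P₀, v̂₀, t) − pos(p₀, v₀, t) ≥ s; moreover the minimum gap over t ≥ 0 equals (P₀ − p₀) − (v₀² − v̂₀²)/(2a) and is attained for all t ≥ v₀/a. -/
import Mathlib


/-- Braked trajectory: a vehicle with initial position `p` and initial speed `v ≥ 0`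
braking at constant deceleration `a > 0` until it stops. -/
noncomputable def pos (a p v t : ℝ) : ℝ :=
  if t ≤ v / a then p + v * t - (a/2) * t^2 else p + v^2 / (2*a)

/-- Worst-case braking safety: if the follower is at least as fast as the leader
and both brake simultaneously with deceleration `a` from an initial gap of at
least `s + (v₀² − v̂₀²)/(2a)`, then the gap stays at least `s` for all `t ≥ 0`;
moreover the minimum gap over `t ≥ 0` equals `(P₀ − p₀) − (v₀² − v̂₀²)/(2a)` and
is attained for all `t ≥ v₀/a`. -/
theorem worst_case_braking_safety (a s P0 p0 vhat0 v0 : ℝ)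
    (ha : 0 < a) (hs : 0 < s) (hvhat : 0 ≤ vhat0) (hvv : vhat0 ≤ v0)
    (hgap : P0 - p0 ≥ s + (v0^2 - vhat0^2) / (2*a)) :
    (∀ t ≥ (0:ℝ), pos a P0 vhat0 t - pos a p0 v0 t ≥ s) ∧
    (∀ t ≥ (0:ℝ), pos a P0 vhat0 t - pos a p0 v0 t ≥ (P0 - p0) - (v0^2 - vhat0^2) / (2*a)) ∧
    (∀ t ≥ v0 / a, pos a P0 vhat0 t - pos a p0 v0 t = (P0 - p0) - (v0^2 - vhat0^2) / (2*a)) := by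
  have ha' : a ≠ 0 := ha.ne'
  have hmin : ∀ t ≥ (0:ℝ), pos a P0 vhat0 t - pos a p0 v0 t ≥ (P0 - p0) - (v0^2 - vhat0^2)/(2*a) := by
    intro t ht
    unfold pos
    split_ifs with h1 h2 h2
    · -- both moving: t ≤ v̂0/a ≤ v0/a
      have h1' : a * t ≤ vhat0 := by
        rw [le_div_iff₀ ha] at h1; linarith [h1]
      rw [ge_iff_le, ← sub_nonneg]
      have e : (P0 + vhat0*t - a/2*t^2 - (p0 + v0*t - a/2*t^2)) - ((P0 - p0) - (v0^2 - vhat0^2)/(2*a))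
          = ((v0 - vhat0) * (v0 + vhat0 - 2*(a*t))) / (2*a) := by field_simp; ring
      rw [e]
      apply div_nonneg (mul_nonneg (by linarith) (by linarith)) (by linarith)
    · -- leader moving, follower stopped: impossible? no, t ≤ v̂0/a but t > v0/a impossible
      exfalso
      have : vhat0 / a ≤ v0 / a := by gcongr
      linarith
    · -- leader stopped, follower moving: v̂0/a < t ≤ v0/a
      have h2' : a * t ≤ v0 := by rw [le_div_iff₀ ha] at h2; linarith
      rw [ge_iff_le]
      have e : P0 + vhat0^2/(2*a) - (p0 + v0*t - a/2*t^2)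
          - ((P0 - p0) - (v0^2 - vhat0^2)/(2*a)) = (a/2)*(t - v0/a)^2 := by
        field_simp; ring
      nlinarith [sq_nonneg (t - v0/a)]
    · rw [ge_iff_le]; apply le_of_eq; ring
  have heq : ∀ t ≥ v0 / a, pos a P0 vhat0 t - pos a p0 v0 t = (P0 - p0) - (v0^2 - vhat0^2)/(2*a) := by
    intro t ht
    have hva : vhat0 / a ≤ v0 / a := by gcongr
    unfold pos
    split_ifs with h1 h2 h2
    · -- t ≤ v̂0/a and t ≤ v0/a, with t ≥ v0/a so t = v0/a = v̂0/a
      have ht1 : t = v0 / a := le_antisymm h2 ht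
      have hvb : vhat0 = v0 := by
        have : v0 / a ≤ vhat0 / a := ht1 ▸ h1
        have := (div_le_div_iff_of_pos_right ha).1 this
        linarith
      subst hvb; subst ht1; field_simp; ring
    · exact absurd (h1.trans hva) h2
    · have ht1 : t = v0 / a := le_antisymm h2 ht
      subst ht1; field_simp; ring
    · ring
  refine ⟨fun t ht => ?_, hmin, heq⟩
  have := hmin t ht
  linarith
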